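/- For every integer k ≥ 2, the k×k symmetric matrix A with entries A_{ij} = k·min(i−1, j−1) − (i−1)(j−1), for 1 ≤ i,j ≤ k, has eigenvalues k/(4 sin²(jπ/(2k))) for j = 1, …, k−1, together with the eigenvalue 0; the eigenvector for eigenvalue 0 is (1,0,…,0)ᵀ and the eigenvector for the j-th nonzero eigenvalue has i-th entry √(2/k)·sin((i−1)jπ/k). -/

import Mathlib

open Real Finset

noncomputable def sf (k j n : ℕ) : ℝ := Real.sin ((n : ℝ) * (j : ℝ) * Real.pi / (k : ℝ))

noncomputable def Wf (k j n : ℕ) : ℝ :=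
  ∑ l : Fin k, ((k:ℝ) * min (n:ℝ) ((l:ℕ):ℝ) - (n:ℝ) * ((l:ℕ):ℝ)) * sf k j l

lemma sf_zero (k j : ℕ) : sf k j 0 = 0 := by simp [sf]

lemma sf_k (k j : ℕ) (hk : k ≠ 0) : sf k j k = 0 := by
  have h : ((k:ℝ)) * (j:ℝ) * Real.pi / (k:ℝ) = (j:ℝ) * Real.pi := by
    field_simp
  rw [sf, h, Real.sin_nat_mul_pi]

lemma sf_rec (k j n : ℕ) (hn : 1 ≤ n) :
    sf k j (n+1) + sf k j (n-1)
      = 2 * Real.cos ((j:ℝ) * Real.pi / (k:ℝ)) * sf k j n := by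
  obtain ⟨m, rfl⟩ := Nat.exists_eq_add_of_le hn
  set θ : ℝ := (j:ℝ) * Real.pi / (k:ℝ) with hθ
  have h1 : ((1 + m + 1 : ℕ):ℝ) * (j:ℝ) * Real.pi / (k:ℝ)
      = ((1+m : ℕ):ℝ) * (j:ℝ) * Real.pi / (k:ℝ) + θ := by
    rw [hθ]; push_cast; ring
  have h2 : ((1 + m - 1 : ℕ):ℝ) * (j:ℝ) * Real.pi / (k:ℝ)
      = ((1+m : ℕ):ℝ) * (j:ℝ) * Real.pi / (k:ℝ) - θ := by
    rw [hθ]; push_cast [Nat.add_sub_cancel_left]; ring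
  rw [sf, sf, sf, h1, h2, Real.sin_add, Real.sin_sub]
  ring

lemma Wf_zero (k j : ℕ) : Wf k j 0 = 0 := by
  apply Finset.sum_eq_zero
  intro l _
  have h0 : ((0:ℕ):ℝ) = 0 := by norm_cast
  rw [h0, min_eq_left (Nat.cast_nonneg _)]
  ring

lemma Wf_k (k j : ℕ) : Wf k j k = 0 := by
  apply Finset.sum_eq_zero
  intro l _
  rw [min_eq_right (by exact_mod_cast (l.isLt.le))]
  ring

lemma Wf_rec (k j n : ℕ) (hn1 : 1 ≤ n) (hnk : n < k) :
    Wf k j (n+1) - 2 * Wf k j n + Wf k j (n-1) = -(k:ℝ) * sf k j n := by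
  have hstep : Wf k j (n+1) - 2 * Wf k j n + Wf k j (n-1)
      = ∑ l : Fin k, (if (l : ℕ) = n then -(k:ℝ) * sf k j l else 0) := by
    rw [Wf, Wf, Wf, Finset.mul_sum, ← Finset.sum_sub_distrib, ← Finset.sum_add_distrib]
    apply Finset.sum_congr rfl
    intro l _
    have hcast : ((n - 1 : ℕ):ℝ) = (n:ℝ) - 1 := by
      push_cast [Nat.cast_sub hn1]; ring
    rcases lt_trichotomy (l:ℕ) n with h | h | h
    · have hl1 : ((l:ℕ):ℝ) ≤ ((n+1:ℕ):ℝ) := by exact_mod_cast Nat.le_of_lt (by omega)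
      have hl2 : ((l:ℕ):ℝ) ≤ (n:ℝ) := by exact_mod_cast Nat.le_of_lt h
      have hl3 : ((l:ℕ):ℝ) ≤ ((n-1:ℕ):ℝ) := by exact_mod_cast (by omega : (l:ℕ) ≤ n - 1)
      rw [min_eq_right hl1, min_eq_right hl2, min_eq_right hl3, if_neg (by omega), hcast]
      push_cast
      ring
    · rw [if_pos h]
      have hln : ((l:ℕ):ℝ) = (n:ℝ) := by exact_mod_cast h
      have h1 : min ((n+1:ℕ):ℝ) ((l:ℕ):ℝ) = (n:ℝ) := by
        rw [min_eq_right (by push_cast [hln]; linarith), hln]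
      have h2 : min ((n:ℕ):ℝ) ((l:ℕ):ℝ) = (n:ℝ) := by rw [hln]; simp
      have h3 : min ((n-1:ℕ):ℝ) ((l:ℕ):ℝ) = (n:ℝ) - 1 := by
        rw [min_eq_left (by rw [hcast, hln]; linarith), hcast]
      rw [h1, h2, h3, hln, hcast]
      push_cast
      ring
    · have hl1 : ((n+1:ℕ):ℝ) ≤ ((l:ℕ):ℝ) := by exact_mod_cast (by omega : n+1 ≤ (l:ℕ))
      have hl2 : ((n:ℕ):ℝ) ≤ ((l:ℕ):ℝ) := by exact_mod_cast Nat.le_of_lt h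
      have hl3 : ((n-1:ℕ):ℝ) ≤ ((l:ℕ):ℝ) := by exact_mod_cast (by omega : n - 1 ≤ (l:ℕ))
      rw [min_eq_left hl1, min_eq_left hl2, min_eq_left hl3, if_neg (by omega), hcast]
      push_cast
      ring
  rw [hstep]
  have : ∀ l : Fin k, ((l:ℕ) = n) = (l = ⟨n, hnk⟩) := by
    intro l; rw [eq_iff_iff, Fin.ext_iff]
  simp only [this]
  rw [Finset.sum_ite_eq' Finset.univ (⟨n, hnk⟩ : Fin k) (fun l => -(k:ℝ) * sf k j l)]
  simp

lemma key (k j : ℕ) (hk : 2 ≤ k) (hj1 : 1 ≤ j) (hjk : j < k) :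
    ∀ n ≤ k, Wf k j n
      = ((k:ℝ) / (4 * Real.sin ((j:ℝ) * Real.pi / (2 * (k:ℝ))) ^ 2)) * sf k j n := by
  have hkpos : (0:ℝ) < k := by positivity
  have hk0 : (k:ℝ) ≠ 0 := ne_of_gt hkpos
  set x : ℝ := (j:ℝ) * Real.pi / (2 * (k:ℝ)) with hx
  have hxpos : 0 < x := by
    rw [hx]
    have : 0 < (j:ℝ) := by exact_mod_cast hj1
    positivity
  have hxlt : x < Real.pi := by
    rw [hx]
    rw [div_lt_iff₀ (by positivity)]
    have hjr : (j:ℝ) < (k:ℝ) := by exact_mod_cast hjk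
    nlinarith [Real.pi_pos]
  have hsinx : 0 < Real.sin x := Real.sin_pos_of_pos_of_lt_pi hxpos hxlt
  set c : ℝ := 4 * Real.sin x ^ 2 with hc
  have hcpos : 0 < c := by positivity
  set lam : ℝ := (k:ℝ) / c with hlam
  have hlamc : lam * c = k := div_mul_cancel₀ _ (ne_of_gt hcpos)
  have hcos : 2 - 2 * Real.cos ((j:ℝ) * Real.pi / (k:ℝ)) = c := by
    have h2x : (j:ℝ) * Real.pi / (k:ℝ) = 2 * x := by
      rw [hx]; field_simp
    rw [h2x, Real.cos_two_mul', Real.cos_sq', hc]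
    ring
  set U : ℕ → ℝ := fun n => Wf k j n - lam * sf k j n with hU
  have hU0 : U 0 = 0 := by simp [hU, Wf_zero, sf_zero]
  have hUk : U k = 0 := by simp [hU, Wf_k, sf_k k j (by omega)]
  have hstep : ∀ n, 1 ≤ n → n < k → U (n+1) = 2 * U n - U (n-1) := by
    intro n hn1 hnk
    have h1 := Wf_rec k j n hn1 hnk
    have h2 := sf_rec k j n hn1
    have hc2 : lam * (2 - 2 * Real.cos ((j:ℝ) * Real.pi / (k:ℝ))) = (k:ℝ) := by
      rw [hcos]; exact hlamc
    simp only [hU]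
    linear_combination h1 - lam * h2 + sf k j n * hc2
  have hlin : ∀ n, n ≤ k → U n = (n:ℝ) * U 1 := by
    intro n
    induction n using Nat.strong_induction_on with
    | _ n ih =>
      match n with
      | 0 => intro _; simp [hU0]
      | 1 => intro _; simp
      | (m+2) =>
        intro hm
        have e1 : U (m+1) = ((m+1:ℕ):ℝ) * U 1 := ih (m+1) (by omega) (by omega)
        have e2 : U m = (m:ℝ) * U 1 := ih m (by omega) (by omega)
        have := hstep (m+1) (by omega) (by omega)
        rw [show m + 1 + 1 = m + 2 from rfl, show m + 1 - 1 = m from rfl] at this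
        rw [this, e1, e2]
        push_cast
        ring
  have hU1 : U 1 = 0 := by
    have := hlin k le_rfl
    rw [hUk] at this
    have := this.symm
    rcases mul_eq_zero.mp this with h | h
    · exact absurd h hk0
    · exact h
  intro n hn
  have h := hlin n hn
  rw [hU1, mul_zero] at h
  have h2 : Wf k j n - lam * sf k j n = 0 := h
  linarith

theorem stmt9 (k : ℕ) (hk : 2 ≤ k) :
    ((Matrix.of fun i j : Fin k => (k : ℝ) * min (i : ℝ) (j : ℝ) - (i : ℝ) * (j : ℝ)).mulVec
        (fun i => if (i : ℕ) = 0 then 1 else 0) = 0) ∧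
    ∀ j : Fin k, (j : ℕ) ≠ 0 →
      (Matrix.of fun i j : Fin k => (k : ℝ) * min (i : ℝ) (j : ℝ) - (i : ℝ) * (j : ℝ)).mulVec
          (fun i => Real.sqrt (2 / (k : ℝ)) * Real.sin ((i : ℝ) * (j : ℝ) * Real.pi / (k : ℝ)))
        = ((k : ℝ) / (4 * Real.sin ((j : ℝ) * Real.pi / (2 * (k : ℝ))) ^ 2)) •
          (fun i : Fin k => Real.sqrt (2 / (k : ℝ)) * Real.sin ((i : ℝ) * (j : ℝ) * Real.pi / (k : ℝ))) := by
  constructor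
  · funext i
    simp only [Matrix.mulVec, dotProduct, Matrix.of_apply, Pi.zero_apply]
    apply Finset.sum_eq_zero
    intro l _
    by_cases h : (l : ℕ) = 0
    · rw [if_pos h, mul_one]
      have : ((l:ℕ):ℝ) = 0 := by rw [h]; norm_num
      rw [this, min_eq_right (by positivity), mul_zero, mul_zero, sub_zero]
    · rw [if_neg h, mul_zero]
  · intro j hj
    have hj1 : 1 ≤ (j:ℕ) := Nat.one_le_iff_ne_zero.mpr hj
    have hjk : (j:ℕ) < k := j.isLt
    funext i
    simp only [Matrix.mulVec, dotProduct, Matrix.of_apply, Pi.smul_apply, smul_eq_mul]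
    have hW := key k j hk hj1 hjk i (le_of_lt i.isLt)
    have hL : ∑ l : Fin k, ((k : ℝ) * min ((i:ℕ):ℝ) ((l:ℕ):ℝ) - ((i:ℕ):ℝ) * ((l:ℕ):ℝ)) *
        (Real.sqrt (2 / (k : ℝ)) * Real.sin (((l:ℕ):ℝ) * ((j:ℕ):ℝ) * Real.pi / (k : ℝ)))
        = Real.sqrt (2 / (k : ℝ)) * Wf k (j:ℕ) (i:ℕ) := by
      rw [Wf, Finset.mul_sum]
      apply Finset.sum_congr rfl
      intro l _
      rw [sf]
      ring
    rw [hL, hW, sf]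
    ring
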